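/- arXiv:2309.08693 — 3 statements merged into one kernel-verified Lean document; each statement's English description precedes it below -/
import Mathlib

section
/- Let $H = (V, S)$ be a signed hypergraph and let $\mathcal{I}$ be the system of linear equalities obtained by linearizing, for each signed edge $s \in S$, the multilinear expansion of $\prod_{v \in s} \sigma_s(z_v)$ in terms of the monomial variables of the multilinear hypergraph $\mathrm{mh}(H)$. Then the pseudo-Boolean polytope $\mathrm{PBP}(H)$ equals the projection onto the $(x, z)$-variables of the set of points $(x, y, z)$ satisfying $\mathcal{I}$ with $(x, y)$ in the multilinear polytope of $\mathrm{mh}(H)$. -/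
open Finset

/-- A signed edge on node set `V`: an underlying edge together with a sign function
(`true` = +1, `false` = -1; only values on `edge` are relevant). -/
structure SignedEdge (V : Type*) where
  edge : Finset V
  sign : V → Bool

instance {V : Type*} [DecidableEq V] [Fintype V] : DecidableEq (SignedEdge V) :=
  fun a b =>
    decidable_of_iff (a.edge = b.edge ∧ a.sign = b.sign) (by
      constructor
      · rintro ⟨h1, h2⟩; cases a; cases b; simp_all
      · rintro rfl; exact ⟨rfl, rfl⟩)

variable {V : Type*} [DecidableEq V] [Fintype V]

/-- The positively signed part `p(s)` of a signed edge. -/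
def posPart (s : SignedEdge V) : Finset V := s.edge.filter fun v => s.sign v = true

/-- The negatively signed part of a signed edge. -/
def negPart (s : SignedEdge V) : Finset V := s.edge.filter fun v => s.sign v = false

/-- The edge set of the multilinear hypergraph `mh(H)`: all sets `p(s) ∪ t` with `s ∈ S`,
`t` a subset of the negatively signed part of `s`, of cardinality at least two. -/
def mhEdges (S : Finset (SignedEdge V)) : Finset (Finset V) :=
  (S.biUnion fun s => (negPart s).powerset.image fun t => posPart s ∪ t).filter
    fun e => 2 ≤ e.card

/-- The pseudo-Boolean set `PBS(H)` of the signed hypergraph `H = (V, S)`, as a subset of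
`ℝ^V × ℝ^S`. -/
def PBS (S : Finset (SignedEdge V)) : Set ((V → ℝ) × (↥S → ℝ)) :=
  {p | (∀ v, p.1 v = 0 ∨ p.1 v = 1) ∧
    ∀ s : ↥S, p.2 s = ∏ v ∈ (↑s : SignedEdge V).edge,
      (if (↑s : SignedEdge V).sign v then p.1 v else 1 - p.1 v)}

/-- The multilinear set of the hypergraph `(V, E)`, as a subset of `ℝ^V × ℝ^E`. -/
def MLS (E : Finset (Finset V)) : Set ((V → ℝ) × (↥E → ℝ)) :=
  {p | (∀ v, p.1 v = 0 ∨ p.1 v = 1) ∧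
    ∀ e : ↥E, p.2 e = ∏ v ∈ (↑e : Finset V), p.1 v}

/-- The value associated to an index set `A` in the linearization system `𝓘`: the `y`-variable
of `A` if `A` is an edge of `mh(H)`, `x_a` if `A = {a}`, and `1` if `A = ∅`. -/
def linVal (S : Finset (SignedEdge V)) (x : V → ℝ) (y : ↥(mhEdges S) → ℝ)
    (A : Finset V) : ℝ :=
  if hA : A ∈ mhEdges S then y ⟨A, hA⟩ else ∏ v ∈ A, x v

lemma mem_posPart {s : SignedEdge V} {v : V} :
    v ∈ posPart s ↔ v ∈ s.edge ∧ s.sign v = true := Finset.mem_filter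

lemma mem_negPart {s : SignedEdge V} {v : V} :
    v ∈ _root_.negPart s ↔ v ∈ s.edge ∧ s.sign v = false := Finset.mem_filter

lemma pos_disj_neg (s : SignedEdge V) : Disjoint (posPart s) (_root_.negPart s) := by
  rw [Finset.disjoint_left]
  intro a ha hb
  rw [mem_posPart] at ha; rw [mem_negPart] at hb; simp_all

lemma pos_union_neg (s : SignedEdge V) : posPart s ∪ _root_.negPart s = s.edge := by
  ext a
  rw [Finset.mem_union, mem_posPart, mem_negPart]
  rcases Bool.dichotomy (s.sign a) with h | h <;> simp [h]

lemma prod_sigma_eq (s : SignedEdge V) (x : V → ℝ) :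
    (∏ v ∈ s.edge, (if s.sign v then x v else 1 - x v)) =
      ∑ t ∈ (_root_.negPart s).powerset, (-1 : ℝ) ^ t.card * ∏ v ∈ posPart s ∪ t, x v := by
  rw [← pos_union_neg s, prod_union (pos_disj_neg s)]
  have h1 : ∏ v ∈ posPart s, (if s.sign v then x v else 1 - x v) = ∏ v ∈ posPart s, x v :=
    Finset.prod_congr rfl (by intro v hv; rw [mem_posPart] at hv; simp [hv.2])
  have h2 : ∏ v ∈ _root_.negPart s, (if s.sign v then x v else 1 - x v)
      = ∏ v ∈ _root_.negPart s, ((-x v) + 1) := by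
    refine Finset.prod_congr rfl ?_
    intro v hv; rw [mem_negPart] at hv; simp [hv.2]; ring
  rw [h1, h2, Finset.prod_add, Finset.mul_sum]
  refine Finset.sum_congr rfl ?_
  intro t ht
  simp only [mem_powerset] at ht
  rw [prod_union (disjoint_of_subset_right ht (pos_disj_neg s))]
  have hneg : ∏ v ∈ t, -x v = (-1 : ℝ) ^ t.card * ∏ v ∈ t, x v := by
    rw [← Finset.prod_const, ← prod_mul_distrib]; simp
  simp only [Finset.prod_const_one, mul_one]
  rw [hneg]; ring

lemma mem_mhEdges_of {S : Finset (SignedEdge V)} {s : SignedEdge V} {t : Finset V}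
    (hs : s ∈ S) (ht : t ⊆ _root_.negPart s) (hc : 2 ≤ (posPart s ∪ t).card) :
    posPart s ∪ t ∈ mhEdges S := by
  rw [mhEdges, mem_filter]
  exact ⟨Finset.mem_biUnion.mpr ⟨s, hs, Finset.mem_image.mpr ⟨t, mem_powerset.mpr ht, rfl⟩⟩, hc⟩

def laux (S : Finset (SignedEdge V)) (x : V → ℝ) (y : ↥(mhEdges S) → ℝ) (A : Finset V) : ℝ :=
  if hA : A ∈ mhEdges S then y ⟨A, hA⟩ else ∑ v ∈ A, x v

def caux (S : Finset (SignedEdge V)) (A : Finset V) : ℝ :=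
  if A ∈ mhEdges S then 0 else if A = ∅ then 1 else 0

lemma linVal_eq {S : Finset (SignedEdge V)} {s : SignedEdge V} {t : Finset V}
    (hs : s ∈ S) (ht : t ⊆ _root_.negPart s) (x : V → ℝ) (y : ↥(mhEdges S) → ℝ) :
    linVal S x y (posPart s ∪ t) = laux S x y (posPart s ∪ t) + caux S (posPart s ∪ t) := by
  by_cases h : posPart s ∪ t ∈ mhEdges S
  · simp [linVal, laux, caux, h]
  · have hcard : (posPart s ∪ t).card ≤ 1 := by
      by_contra hc
      push_neg at hc
      exact h (mem_mhEdges_of hs ht hc)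
    rcases Nat.le_one_iff_eq_zero_or_eq_one.mp hcard with h0 | h1
    · have he : posPart s ∪ t = ∅ := Finset.card_eq_zero.mp h0
      rw [he] at h
      simp [linVal, laux, caux, h, he]
    · obtain ⟨v, hv⟩ := Finset.card_eq_one.mp h1
      simp [linVal, laux, caux, h, hv]

lemma laux_add (S : Finset (SignedEdge V)) (x x' : V → ℝ) (y y' : ↥(mhEdges S) → ℝ)
    (A : Finset V) : laux S (x + x') (y + y') A = laux S x y A + laux S x' y' A := by
  unfold laux; split <;> simp [Finset.sum_add_distrib]

lemma laux_smul (S : Finset (SignedEdge V)) (c : ℝ) (x : V → ℝ) (y : ↥(mhEdges S) → ℝ)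
    (A : Finset V) : laux S (c • x) (c • y) A = c * laux S x y A := by
  unfold laux; split <;> simp [Finset.mul_sum]

def Lmap (S : Finset (SignedEdge V)) :
    ((V → ℝ) × (↥(mhEdges S) → ℝ)) →ₗ[ℝ] ((V → ℝ) × (↥S → ℝ)) where
  toFun p := (p.1, fun s => ∑ t ∈ (_root_.negPart (↑s : SignedEdge V)).powerset,
    (-1 : ℝ) ^ t.card * laux S p.1 p.2 (posPart (↑s : SignedEdge V) ∪ t))
  map_add' p q := by
    refine Prod.ext rfl ?_
    funext s
    simp only [Prod.fst_add, Prod.snd_add, Pi.add_apply, ← Finset.sum_add_distrib]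
    refine Finset.sum_congr rfl fun t _ => ?_
    rw [laux_add]; ring
  map_smul' c p := by
    refine Prod.ext rfl ?_
    funext s
    simp only [RingHom.id_apply, Prod.smul_fst, Prod.smul_snd, Pi.smul_apply, smul_eq_mul, Finset.mul_sum]
    refine Finset.sum_congr rfl fun t _ => ?_
    rw [laux_smul]; ring

def cvec (S : Finset (SignedEdge V)) : ((V → ℝ) × (↥S → ℝ)) :=
  (0, fun s => ∑ t ∈ (_root_.negPart (↑s : SignedEdge V)).powerset,
    (-1 : ℝ) ^ t.card * caux S (posPart (↑s : SignedEdge V) ∪ t))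

noncomputable def Fmap (S : Finset (SignedEdge V)) :
    ((V → ℝ) × (↥(mhEdges S) → ℝ)) →ᵃ[ℝ] ((V → ℝ) × (↥S → ℝ)) where
  toFun p := Lmap S p + cvec S
  linear := Lmap S
  map_vadd' p v := by
    simp [vadd_eq_add, map_add, add_assoc]

lemma Fmap_apply (S : Finset (SignedEdge V)) (x : V → ℝ) (y : ↥(mhEdges S) → ℝ) :
    Fmap S (x, y) = (x, fun s : ↥S => ∑ t ∈ (_root_.negPart (↑s : SignedEdge V)).powerset,
      (-1 : ℝ) ^ t.card * linVal S x y (posPart (↑s : SignedEdge V) ∪ t)) := by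
  refine Prod.ext ?_ ?_
  · show x + 0 = x
    simp
  · funext s
    show (∑ t ∈ (_root_.negPart (↑s : SignedEdge V)).powerset,
        (-1 : ℝ) ^ t.card * laux S x y (posPart (↑s : SignedEdge V) ∪ t))
      + (∑ t ∈ (_root_.negPart (↑s : SignedEdge V)).powerset,
        (-1 : ℝ) ^ t.card * caux S (posPart (↑s : SignedEdge V) ∪ t)) = _
    rw [← Finset.sum_add_distrib]
    refine Finset.sum_congr rfl fun t ht => ?_
    rw [linVal_eq s.2 (Finset.mem_powerset.mp ht)]
    ring

lemma Fmap_image_MLS (S : Finset (SignedEdge V)) :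
    Fmap S '' MLS (mhEdges S) = PBS S := by
  ext p
  constructor
  · rintro ⟨⟨x, y⟩, ⟨hx01, hy⟩, rfl⟩
    rw [Fmap_apply]
    refine ⟨hx01, fun s => ?_⟩
    show _ = _
    rw [prod_sigma_eq]
    refine Finset.sum_congr rfl fun t ht => ?_
    congr 1
    rw [linVal]
    split
    · exact hy _
    · rfl
  · rintro ⟨hx01, hz⟩
    refine ⟨(p.1, fun e => ∏ v ∈ (↑e : Finset V), p.1 v), ⟨hx01, fun e => rfl⟩, ?_⟩
    rw [Fmap_apply]
    refine Prod.ext rfl ?_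
    funext s
    show _ = p.2 s
    rw [hz s, prod_sigma_eq]
    refine Finset.sum_congr rfl fun t ht => ?_
    congr 1
    rw [linVal]
    split <;> rfl

/-- The pseudo-Boolean polytope `PBP(H)` equals the projection onto the
`(x, z)`-variables of the points `(x, y, z)` satisfying the linearization system `𝓘`
(one equation `z_s = ∑_{t ⊆ neg(s)} (-1)^{|t|} val(p(s) ∪ t)` per signed edge `s`) with
`(x, y)` in the multilinear polytope of `mh(H)`. -/
theorem stmt_5 (S : Finset (SignedEdge V)) (hS : ∀ s ∈ S, 2 ≤ s.edge.card) :
    convexHull ℝ (PBS S) =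
      {p : (V → ℝ) × (↥S → ℝ) | ∃ y : ↥(mhEdges S) → ℝ,
        (p.1, y) ∈ convexHull ℝ (MLS (mhEdges S)) ∧
        ∀ s : ↥S, p.2 s = ∑ t ∈ (negPart (↑s : SignedEdge V)).powerset,
          (-1 : ℝ) ^ t.card * linVal S p.1 y (posPart (↑s : SignedEdge V) ∪ t)} := by
  have himg : {p : (V → ℝ) × (↥S → ℝ) | ∃ y : ↥(mhEdges S) → ℝ,
        (p.1, y) ∈ convexHull ℝ (MLS (mhEdges S)) ∧
        ∀ s : ↥S, p.2 s = ∑ t ∈ (_root_.negPart (↑s : SignedEdge V)).powerset,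
          (-1 : ℝ) ^ t.card * linVal S p.1 y (posPart (↑s : SignedEdge V) ∪ t)}
      = Fmap S '' convexHull ℝ (MLS (mhEdges S)) := by
    ext p
    constructor
    · rintro ⟨y, hy, hz⟩
      refine ⟨(p.1, y), hy, ?_⟩
      rw [Fmap_apply]
      exact Prod.ext rfl (funext fun s => (hz s).symm)
    · rintro ⟨⟨x, y⟩, hq, rfl⟩
      rw [Fmap_apply]
      exact ⟨y, hq, fun s => rfl⟩
  rw [himg, (Fmap S).image_convexHull, Fmap_image_MLS]
end

section
/- Let $p_1 \subseteq \cdots \subseteq p_k$ be signed sets with underlying sets totally ordered by inclusion, and let $z \in \{0,1\}^U$ be a binary point on the union of the underlying sets, defining $z_{p_i} := \prod_{v \in p_i} \sigma_{p_i}(z_v)$. If $z_{p_i} = 1$ and $z_{p_t} = 0$ for all $t \in \mathrm{ext}(i)$, then $z_{p_t} = 0$ for all $t \in \{i+1, \dots, k\}$; moreover if $z_{p_i}=1$ then at most one $t \in \mathrm{ext}(i)$ has $z_{p_t}=1$. -/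
open Finset

/-- `p_t` is an extension of `p_j` (for `j < t`): the signs agree on the underlying set of
`p_j`. -/
def IsExt {V : Type*} {k : ℕ} (e : Fin k → Finset V) (η : Fin k → V → Bool)
    (j t : Fin k) : Prop :=
  j < t ∧ ∀ v ∈ e j, η t v = η j v

/-- `p_t` is a minimal extension of `p_i`: it extends `p_i` and extends no `p_j` with
`i < j < t`. -/
def IsMinExt {V : Type*} {k : ℕ} (e : Fin k → Finset V) (η : Fin k → V → Bool)
    (i t : Fin k) : Prop :=
  IsExt e η i t ∧ ∀ j, i < j → j < t → ¬ IsExt e η j t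

/-- For signed sets `p₁ ⊆ ⋯ ⊆ p_k` with underlying sets totally ordered by
inclusion and a binary point `z`, writing `z_{pᵢ} = ∏_{v ∈ pᵢ} σ_{pᵢ}(z_v)`: if `z_{pᵢ} = 1`
and `z_{p_t} = 0` for all `t ∈ ext(i)` (the minimal extensions of `pᵢ`), then `z_{p_t} = 0`
for all `t > i`; moreover if `z_{pᵢ} = 1` then at most one `t ∈ ext(i)` has `z_{p_t} = 1`. -/
theorem stmt_11 {V : Type*} (k : ℕ) (e : Fin k → Finset V) (η : Fin k → V → Bool)
    (hmono : ∀ i j : Fin k, i ≤ j → e i ⊆ e j)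
    (z : V → ℝ) (hz : ∀ v, z v = 0 ∨ z v = 1)
    (zp : Fin k → ℝ)
    (hzp : ∀ i, zp i = ∏ v ∈ e i, (if η i v then z v else 1 - z v))
    (i : Fin k) (hi : zp i = 1) :
    ((∀ t, IsMinExt e η i t → zp t = 0) → ∀ t, i < t → zp t = 0) ∧
    (∀ t t', IsMinExt e η i t → IsMinExt e η i t' →
      zp t = 1 → zp t' = 1 → t = t') := by
  classical
  set fac : Fin k → V → ℝ := fun t v => if η t v then z v else 1 - z v with hfac
  have fac01 : ∀ t v, fac t v = 0 ∨ fac t v = 1 := by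
    intro t v
    rcases hz v with h | h <;> simp [fac, h] <;> split <;> simp
  have zp01 : ∀ t, zp t = 0 ∨ zp t = 1 := by
    intro t
    rw [hzp t]
    induction (e t) using Finset.induction_on with
    | empty => simp
    | @insert a s hx ih =>
      rw [Finset.prod_insert hx]
      rcases ih with h | h <;> rcases fac01 t a with h2 | h2 <;>
        simp only [hfac] at h2 <;> rw [h, h2] <;> norm_num
  have one_iff : ∀ t, zp t = 1 ↔ ∀ v ∈ e t, fac t v = 1 := by
    intro t
    constructor
    · intro h1 v hv
      by_contra hne
      rcases fac01 t v with h0 | h0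
      · have : zp t = 0 := by
          rw [hzp t]; exact Finset.prod_eq_zero hv h0
        rw [this] at h1; norm_num at h1
      · exact hne h0
    · intro h
      rw [hzp t]; exact Finset.prod_eq_one h
  -- if zp j = 1, zp t = 1, j < t then IsExt j t
  have agree : ∀ j t : Fin k, j ≤ t → zp j = 1 → zp t = 1 →
      ∀ v ∈ e j, η t v = η j v := by
    intro j t hjt hj ht v hv
    have h1 : fac j v = 1 := (one_iff j).1 hj v hv
    have h2 : fac t v = 1 := (one_iff t).1 ht v (hmono j t hjt hv)
    rcases hz v with h0 | h0 <;>
    · simp only [fac, h0] at h1 h2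
      cases hηj : η j v <;> cases hηt : η t v <;>
        simp [hηj, hηt] at h1 h2 ⊢ <;> norm_num at h1 h2
  -- zp t = 1 and IsExt j t implies zp j = 1
  have back : ∀ j t : Fin k, IsExt e η j t → zp t = 1 → zp j = 1 := by
    intro j t hext ht
    rw [one_iff]
    intro v hv
    have h2 : fac t v = 1 := (one_iff t).1 ht v (hmono j t hext.1.le hv)
    have := hext.2 v hv
    simpa [fac, this] using h2
  constructor
  · intro hmin
    have main : ∀ n : ℕ, ∀ t : Fin k, t.val = n → i < t → zp t = 0 := by
      intro n
      induction n using Nat.strong_induction_on with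
      | _ n ih =>
        intro t htn hit
        by_contra hne
        have ht1 : zp t = 1 := (zp01 t).resolve_left hne
        have hext : IsExt e η i t := ⟨hit, agree i t hit.le hi ht1⟩
        by_cases hm : IsMinExt e η i t
        · have := hmin t hm; rw [this] at ht1; norm_num at ht1
        · simp only [IsMinExt, not_and, not_forall] at hm
          obtain ⟨j, hij, hjt, hjext⟩ := hm hext
          have : ¬ ¬ IsExt e η j t := hjext
          have hjext' : IsExt e η j t := not_not.mp this
          have hj1 : zp j = 1 := back j t hjext' ht1
          have hlt : (j : ℕ) < n := htn ▸ (Fin.lt_def.mp hjt)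
          have : zp j = 0 := ih j.val hlt j rfl hij
          rw [this] at hj1; norm_num at hj1
    intro t hit
    exact main t.val t rfl hit
  · intro t t' ht ht' h1 h1'
    by_contra hne
    rcases lt_or_gt_of_ne hne with hlt | hlt
    · exact ht'.2 t ht.1.1 hlt ⟨hlt, agree t t' hlt.le h1 h1'⟩
    · exact ht.2 t' ht'.1.1 hlt ⟨hlt, agree t' t hlt.le h1' h1⟩
end

section
/- Let $G = (V, E)$ be a hypergraph with a sequence of $\alpha$-leaves $v_1, \dots, v_n$ exhausting $V$ (so $G$ is $\alpha$-acyclic), let $\bar{e}$ be a maximal edge containing $v_1$, and let $G'$ be obtained from $G$ by replacing every edge containing $v_1$ and contained in $\bar{e}$ by $\bar{e}$ (and adding edges $e \setminus \{v_1\}$ for all edges $e$ containing $v_1$). Then $v_1$ is a $\beta$-leaf of $G'$, and $v_2, \dots, v_n$ is a sequence of $\alpha$-leaves of $G' - v_1$. -/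
open Finset

variable {V : Type*} [DecidableEq V]

/-- Removal of a node from a hypergraph edge set: erase `v` from every edge and keep the
nonempty results. -/
def eraseNodeE (E : Finset (Finset V)) (v : V) : Finset (Finset V) :=
  (E.image fun e => e.erase v).filter fun e => e.Nonempty

/-- `v` is a β-leaf: the edges containing `v` are totally ordered by inclusion. -/
def BetaLeaf (E : Finset (Finset V)) (v : V) : Prop :=
  ∀ e ∈ E, ∀ f ∈ E, v ∈ e → v ∈ f → e ⊆ f ∨ f ⊆ e

/-- `v` is an α-leaf: the family of edges containing `v` has a maximal element containing
them all. -/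
def AlphaLeaf (E : Finset (Finset V)) (v : V) : Prop :=
  ∃ m ∈ E, v ∈ m ∧ ∀ f ∈ E, v ∈ f → f ⊆ m

/-- Successive removal of a list of nodes. -/
def removeList (E : Finset (Finset V)) (l : List V) : Finset (Finset V) :=
  l.foldl eraseNodeE E

/-- Inflation at `v₁` towards the maximal edge `ē`: every edge containing `v₁` (all of which
are contained in `ē`) is replaced by `ē`, and the edges `e \ {v₁}` for edges `e ∋ v₁` are
added. -/
def inflateAt (E : Finset (Finset V)) (v1 : V) (ebar : Finset V) : Finset (Finset V) :=
  E.image (fun e => if v1 ∈ e then ebar else e) ∪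
    (E.filter fun e => v1 ∈ e).image fun e => e.erase v1


lemma edge_eq_ebar {E : Finset (Finset V)} {v1 : V} {ebar : Finset V}
    {e : Finset V} (he : e ∈ inflateAt E v1 ebar) (hve : v1 ∈ e) : e = ebar := by
  unfold inflateAt at he
  rcases Finset.mem_union.1 he with h | h
  · rcases Finset.mem_image.1 h with ⟨e0, _, rfl⟩
    split at hve
    · split <;> simp_all
    · simp_all
  · rcases Finset.mem_image.1 h with ⟨e0, _, rfl⟩
    exact absurd hve (Finset.notMem_erase _ _)

lemma erase_inflate (E : Finset (Finset V)) (v1 : V) (ebar : Finset V)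
    (hebar : ebar ∈ E) :
    eraseNodeE (inflateAt E v1 ebar) v1 = eraseNodeE E v1 := by
  unfold eraseNodeE inflateAt
  ext x
  simp only [Finset.mem_filter, Finset.mem_image, Finset.mem_union, and_congr_left_iff]
  intro hne
  constructor
  · rintro ⟨e, he | he, rfl⟩
    · obtain ⟨e0, he0, rfl⟩ := he
      split
      · exact ⟨ebar, hebar, rfl⟩
      · exact ⟨e0, he0, rfl⟩
    · obtain ⟨e0, ⟨he0, -⟩, rfl⟩ := he
      exact ⟨e0, he0, by simp [Finset.erase_idem]⟩
  · rintro ⟨e, he, rfl⟩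
    by_cases hv : v1 ∈ e
    · exact ⟨e.erase v1, Or.inr ⟨e, ⟨he, hv⟩, rfl⟩, by simp [Finset.erase_idem]⟩
    · exact ⟨e, Or.inl ⟨e, he, by simp [hv]⟩, rfl⟩

/-- Let `G = (V, E)` be an α-acyclic hypergraph with a sequence of α-leaves
`v₁, v₂, …, v_n` exhausting `V`, let `ē` be a maximal edge containing `v₁` (containing every
edge that contains `v₁`), and let `G'` be obtained from `G` by inflating all edges containing
`v₁` to `ē` and adding the edges `e \ {v₁}` for edges `e ∋ v₁`. Then `v₁` is a β-leaf of `G'`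
and `v₂, …, v_n` is a sequence of α-leaves of `G' - v₁`. -/
theorem stmt_15 [Fintype V] (E : Finset (Finset V)) (hE : ∀ e ∈ E, 2 ≤ e.card)
    (l : List V) (hnd : l.Nodup) (hall : ∀ v : V, v ∈ l)
    (halpha : ∀ i : ℕ, ∀ h : i < l.length,
      AlphaLeaf (removeList E (l.take i)) (l.get ⟨i, h⟩))
    (v1 : V) (rest : List V) (hl : l = v1 :: rest)
    (ebar : Finset V) (hebar : ebar ∈ E) (hv1 : v1 ∈ ebar)
    (hmax : ∀ f ∈ E, v1 ∈ f → f ⊆ ebar) :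
    BetaLeaf (inflateAt E v1 ebar) v1 ∧
    ∀ i : ℕ, ∀ h : i < rest.length,
      AlphaLeaf (removeList (eraseNodeE (inflateAt E v1 ebar) v1) (rest.take i))
        (rest.get ⟨i, h⟩) := by
  subst hl
  constructor
  · intro e he f hf hve hvf
    rw [edge_eq_ebar he hve, edge_eq_ebar hf hvf]
    exact Or.inl (subset_refl _)
  · intro i h
    rw [erase_inflate E v1 ebar hebar]
    have h' : i + 1 < (v1 :: rest).length := by simpa using Nat.succ_lt_succ h
    have := halpha (i + 1) h'
    simpa [removeList, List.take_succ_cons] using this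
end
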